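/- arXiv:2007.13934 — 8 statements merged into one kernel-verified Lean document; each statement's English description precedes it below -/
import Mathlib

section
/- Let $b$ and $s$ be independent real-valued random variables with continuous CDFs $F$ (for $b$) and $G$ (for $s$). Let $r = \Pr[b \geq s] > 0$, and define $x = \overline{F}^{-1}(r/2)$ (i.e., $\Pr[b \geq x] = r/2$) and $y = G^{-1}(r/2)$ (i.e., $\Pr[s \leq y] = r/2$). Then $x \geq y$. -/
open MeasureTheory

/-- If `b` and `s` are independent real random variables with continuous CDFs,
`r = Pr[b ≥ s] > 0`, `Pr[b ≥ x] = r/2` and `Pr[s ≤ y] = r/2`, then `x ≥ y`. -/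
theorem stmt0
    {Ω : Type*} [MeasurableSpace Ω] (μ : Measure Ω) [IsProbabilityMeasure μ]
    (b s : Ω → ℝ) (hb : Measurable b) (hs : Measurable s)
    (hindep : ProbabilityTheory.IndepFun b s μ)
    (hbcont : ∀ t : ℝ, μ {ω | b ω = t} = 0)
    (hscont : ∀ t : ℝ, μ {ω | s ω = t} = 0)
    (r x y : ℝ)
    (hr : r = (μ {ω | s ω ≤ b ω}).toReal)
    (hrpos : 0 < r)
    (hx : (μ {ω | x ≤ b ω}).toReal = r / 2)
    (hy : (μ {ω | s ω ≤ y}).toReal = r / 2) :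
    y ≤ x := by
  by_contra hxy
  push_neg at hxy
  set A : Set Ω := b ⁻¹' Set.Ici x with hA
  set B : Set Ω := s ⁻¹' Set.Iic x with hB
  have hAm : MeasurableSet A := hb measurableSet_Ici
  have hBm : MeasurableSet B := hs measurableSet_Iic
  have hAeq : {ω | x ≤ b ω} = A := rfl
  have hsub : {ω | s ω ≤ b ω} ⊆ A ∪ B := by
    intro ω hω
    by_cases h : x ≤ b ω
    · exact Or.inl h
    · exact Or.inr (le_trans hω (le_of_lt (lt_of_not_ge h)))
  have hinter : μ (A ∩ B) = μ A * μ B :=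
    hindep.measure_inter_preimage_eq_mul _ _ measurableSet_Ici measurableSet_Iic
  have hie : μ (A ∪ B) + μ (A ∩ B) = μ A + μ B := measure_union_add_inter' hAm B
  have hfin : ∀ S : Set Ω, μ S ≠ ⊤ := fun S => (measure_lt_top μ S).ne
  -- pass to reals
  have hBy : μ B ≤ μ {ω | s ω ≤ y} := by
    apply measure_mono
    intro ω hω
    exact le_trans hω hxy.le
  have hpB : (μ B).toReal ≤ r / 2 := by
    rw [← hy]; exact ENNReal.toReal_mono (hfin _) hBy
  have hpBnn : 0 ≤ (μ B).toReal := ENNReal.toReal_nonneg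
  have hrle : r ≤ (μ (A ∪ B)).toReal := by
    rw [hr]; exact ENNReal.toReal_mono (hfin _) (measure_mono hsub)
  have hieR : (μ (A ∪ B)).toReal + (μ A).toReal * (μ B).toReal
      = (μ A).toReal + (μ B).toReal := by
    have := congrArg ENNReal.toReal hie
    rwa [ENNReal.toReal_add (hfin _) (hfin _), ENNReal.toReal_add (hfin _) (hfin _),
      hinter, ENNReal.toReal_mul] at this
  rw [hAeq] at hx
  rw [hx] at hieR
  set p := (μ B).toReal with hp
  have h1 : r / 2 * p ≤ 0 := by linarith
  have h2 : 0 ≤ r / 2 * p := mul_nonneg (by linarith) hpBnn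
  have h3 : r / 2 * p = 0 := le_antisymm h1 h2
  have h4 : r / 2 ≤ p := by linarith
  have h5 : 0 < r / 2 * p := mul_pos (by linarith) (by linarith)
  linarith
end

section
/- Let $t_1, \ldots, t_n$ be independent random variables each taking values in $\{0\} \cup [1/2, 1]$, and let $\mathcal{F} \subseteq 2^{[n]}$ be a downward-closed family of subsets of $[n]$ containing $\emptyset$. Define $Z(t) = \max_{T \in \mathcal{F}} \sum_{i \in T} t_i$. Then $\mathrm{Var}[Z(t)] \leq \mathbb{E}[Z(t)]$. -/
open MeasureTheory

section helpers
variable {α : Type*} [MeasurableSpace α] (μ : Measure α) [IsProbabilityMeasure μ]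

lemma int_of_bound (h : α → ℝ) (hm : Measurable h) (C : ℝ) (hb : ∀ x, |h x| ≤ C) :
    Integrable h μ := by
  refine Integrable.mono' (integrable_const C) hm.aestronglyMeasurable ?_
  exact ae_of_all _ fun x => by simpa using hb x

lemma int_sq_of_bound (h : α → ℝ) (hm : Measurable h) (C : ℝ) (hb : ∀ x, |h x| ≤ C) :
    Integrable (fun x => (h x)^2) μ := by
  refine int_of_bound μ _ (hm.pow_const 2) (C^2) fun x => ?_
  rw [abs_pow]
  exact pow_le_pow_left₀ (abs_nonneg _) (hb x) 2

lemma expand_sq (h : α → ℝ) (hm : Measurable h) (C : ℝ) (hb : ∀ x, |h x| ≤ C) (c : ℝ) :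
    ∫ x, (h x - c)^2 ∂μ = ∫ x, (h x)^2 ∂μ - 2*c*(∫ x, h x ∂μ) + c^2 := by
  have ih := int_of_bound μ h hm C hb
  have ih2 := int_sq_of_bound μ h hm C hb
  have e : ∀ x, (h x - c)^2 = (h x)^2 - (2*c)*(h x) + c^2 := fun x => by ring
  simp_rw [e]
  have i3 : Integrable (fun x => h x ^ 2 - 2 * c * h x) μ := ih2.sub (ih.const_mul _)
  rw [integral_add i3 (integrable_const _),
    integral_sub ih2 (ih.const_mul _), MeasureTheory.integral_const_mul, integral_const, probReal_univ,
    one_smul]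


lemma jensen_sq (h : α → ℝ) (hm : Measurable h) (C : ℝ) (hb : ∀ x, |h x| ≤ C) :
    (∫ x, h x ∂μ)^2 ≤ ∫ x, (h x)^2 ∂μ := by
  have h0 : 0 ≤ ∫ x, (h x - ∫ y, h y ∂μ)^2 ∂μ := integral_nonneg fun x => sq_nonneg _
  rw [expand_sq μ h hm C hb] at h0
  nlinarith [h0]

lemma var_le_sq_dist (h : α → ℝ) (hm : Measurable h) (C : ℝ) (hb : ∀ x, |h x| ≤ C) (c : ℝ) :
    ∫ x, (h x)^2 ∂μ - (∫ x, h x ∂μ)^2 ≤ ∫ x, (h x - c)^2 ∂μ := by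
  rw [expand_sq μ h hm C hb c]
  nlinarith [sq_nonneg ((∫ x, h x ∂μ) - c)]
end helpers

section
variable {α : Type*} [MeasurableSpace α] (μ : Measure α) [IsProbabilityMeasure μ]

lemma abs_integral_le_bound (h : α → ℝ) (C : ℝ) (hC : 0 ≤ C) (hb : ∀ x, |h x| ≤ C) :
    |∫ x, h x ∂μ| ≤ C := by
  have := norm_integral_le_of_norm_le_const (μ := μ) (f := h) (C := C)
    (ae_of_all _ fun x => by simpa using hb x)
  simpa using this
end

lemma meas_integral_cons (n : ℕ) (ν0 : Measure ℝ) [SFinite ν0]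
    (φ : (Fin (n+1) → ℝ) → ℝ) (hm : Measurable φ) :
    Measurable fun x : Fin n → ℝ => ∫ y, φ (Fin.cons y x) ∂ν0 := by
  have hc : Measurable (fun p : ℝ × (Fin n → ℝ) => (Fin.cons p.1 p.2 : Fin (n+1) → ℝ)) := by
    refine measurable_pi_iff.2 fun j => ?_
    refine Fin.cases ?_ (fun k => ?_) j
    · simpa using measurable_fst
    · simp only [Fin.cons_succ]; exact (measurable_pi_apply k).comp measurable_snd
  exact ((hm.comp hc).stronglyMeasurable.integral_prod_left').measurable


lemma fubini_cons (n : ℕ) (ν : Fin (n+1) → Measure ℝ) [∀ i, IsProbabilityMeasure (ν i)]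
    (φ : (Fin (n+1) → ℝ) → ℝ) (hm : Measurable φ) (C : ℝ) (hb : ∀ x, |φ x| ≤ C) :
    ∫ z, φ z ∂(Measure.pi ν)
      = ∫ x, ∫ y, φ (Fin.cons y x) ∂(ν 0) ∂(Measure.pi (fun i => ν i.succ)) := by
  have mp := measurePreserving_piFinSuccAbove ν 0
  set e := MeasurableEquiv.piFinSuccAbove (fun _ : Fin (n+1) => ℝ) 0 with he
  have hsa : (fun j : Fin n => ν ((0 : Fin (n+1)).succAbove j)) = (fun i : Fin n => ν i.succ) := by
    funext j; rw [Fin.succAbove_zero]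
  rw [hsa] at mp
  have h1 : ∫ z, φ z ∂(Measure.pi ν)
      = ∫ w, φ (e.symm w) ∂((ν 0).prod (Measure.pi (fun i => ν i.succ))) :=
    ((mp.symm e).integral_comp e.symm.measurableEmbedding φ).symm
  rw [h1]
  have hsymm : ∀ w : ℝ × (Fin n → ℝ), e.symm w = Fin.cons w.1 w.2 := by
    intro w
    simp [he, MeasurableEquiv.piFinSuccAbove, Fin.insertNthEquiv]
  have hint : Integrable (fun w : ℝ × (Fin n → ℝ) => φ (e.symm w))
      ((ν 0).prod (Measure.pi (fun i => ν i.succ))) := by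
    refine Integrable.mono' (integrable_const C)
      (hm.comp e.symm.measurable).aestronglyMeasurable (ae_of_all _ fun w => by simpa using hb _)
  rw [MeasureTheory.integral_prod_symm _ hint]
  simp only [hsymm]

lemma efron_stein : ∀ (n : ℕ) (ν : Fin n → Measure ℝ), (∀ i, IsProbabilityMeasure (ν i)) →
    ∀ (C : ℝ) (f : (Fin n → ℝ) → ℝ), Measurable f → (∀ x, |f x| ≤ C) →
    ∀ (F : Fin n → (Fin n → ℝ) → ℝ), (∀ i, Measurable (F i)) → (∀ i x, |F i x| ≤ C) →
    (∀ i x a, F i (Function.update x i a) = F i x) →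
    ∫ x, (f x)^2 ∂(Measure.pi ν) - (∫ x, f x ∂(Measure.pi ν))^2
      ≤ ∑ i, ∫ x, (f x - F i x)^2 ∂(Measure.pi ν) := by
  intro n
  induction n with
  | zero =>
    intro ν hν C f hfm hfb F hFm hFb hFi
    haveI : ∀ i, IsProbabilityMeasure (ν i) := hν
    simp [MeasureTheory.integral_unique, measure_univ]
  | succ n IH =>
    intro ν hν C f hfm hfb F hFm hFb hFi
    haveI : ∀ i, IsProbabilityMeasure (ν i) := hν
    have hC : 0 ≤ C := le_trans (abs_nonneg _) (hfb (fun _ => 0))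
    set ν0 := ν 0 with hν0
    set ν' : Fin n → Measure ℝ := fun i => ν i.succ with hν'
    haveI : ∀ i, IsProbabilityMeasure (ν' i) := fun i => hν _
    set π := Measure.pi ν with hπ
    set π' := Measure.pi ν' with hπ'
    -- the conditional means
    set g : (Fin n → ℝ) → ℝ := fun x => ∫ y, f (Fin.cons y x) ∂ν0 with hg
    set G : Fin n → (Fin n → ℝ) → ℝ := fun i x => ∫ y, F i.succ (Fin.cons y x) ∂ν0 with hG
    set q : (Fin n → ℝ) → ℝ := fun x => ∫ y, (f (Fin.cons y x))^2 ∂ν0 with hq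
    have hconsm : ∀ x : Fin n → ℝ, Measurable (fun y : ℝ => (Fin.cons y x : Fin (n+1) → ℝ)) := by
      intro x
      refine measurable_pi_iff.2 fun j => ?_
      refine Fin.cases ?_ (fun k => ?_) j
      · simp only [Fin.cons_zero]; exact measurable_id
      · simpa using measurable_const
    have hgm : Measurable g := meas_integral_cons n ν0 f hfm
    have hgb : ∀ x, |g x| ≤ C := fun x => abs_integral_le_bound ν0 _ C hC (fun y => hfb _)
    have hGm : ∀ i, Measurable (G i) := fun i => meas_integral_cons n ν0 _ (hFm i.succ)
    have hGb : ∀ i x, |G i x| ≤ C := fun i x =>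
      abs_integral_le_bound ν0 _ C hC (fun y => hFb _ _)
    have hqm : Measurable q := meas_integral_cons n ν0 _ (hfm.pow_const 2)
    have hqb : ∀ x, |q x| ≤ C^2 := fun x => by
      refine abs_integral_le_bound ν0 _ (C^2) (by positivity) (fun y => ?_)
      rw [abs_pow]; exact pow_le_pow_left₀ (abs_nonneg _) (hfb _) 2
    have hGi : ∀ i x a, G i (Function.update x i a) = G i x := by
      intro i x a
      simp only [hG]
      refine integral_congr_ae (ae_of_all _ fun y => ?_)
      show F i.succ (Fin.cons y (Function.update x i a)) = F i.succ (Fin.cons y x)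
      rw [Fin.cons_update, hFi]
    -- Fubini identities
    have hB : ∫ z, f z ∂π = ∫ x, g x ∂π' := fubini_cons n ν f hfm C hfb
    have hA : ∫ z, (f z)^2 ∂π = ∫ x, q x ∂π' := by
      refine fubini_cons n ν _ (hfm.pow_const 2) (C^2) (fun x => ?_)
      rw [abs_pow]; exact pow_le_pow_left₀ (abs_nonneg _) (hfb _) 2
    have hdiffb : ∀ (j : Fin (n+1)) z, |(fun z => (f z - F j z)^2) z| ≤ (2*C)^2 := by
      intro j z
      rw [abs_pow]
      refine pow_le_pow_left₀ (abs_nonneg _) ?_ 2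
      calc |f z - F j z| ≤ |f z| + |F j z| := abs_sub _ _
        _ ≤ 2*C := by have := hfb z; have := hFb j z; linarith
    have hdiffm : ∀ j : Fin (n+1), Measurable (fun z => (f z - F j z)^2) :=
      fun j => ((hfm.sub (hFm j)).pow_const 2)
    have hES : ∀ j : Fin (n+1), ∫ z, (f z - F j z)^2 ∂π
        = ∫ x, ∫ y, (f (Fin.cons y x) - F j (Fin.cons y x))^2 ∂ν0 ∂π' :=
      fun j => fubini_cons n ν _ (hdiffm j) ((2*C)^2) (hdiffb j)
    -- step (ii) : variance along coordinate 0
    have step2 : ∫ x, q x ∂π' - ∫ x, (g x)^2 ∂π' ≤ ∫ z, (f z - F 0 z)^2 ∂π := by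
      have ptw : ∀ x, q x - (g x)^2
          ≤ ∫ y, (f (Fin.cons y x) - F 0 (Fin.cons y x))^2 ∂ν0 := by
        intro x
        have hc0 : ∀ y : ℝ, F 0 (Fin.cons y x) = F 0 (Fin.cons 0 x) := by
          intro y
          have h := @Fin.update_cons_zero n (fun _ => ℝ) (0:ℝ) x y
          rw [← h, hFi]
        have := var_le_sq_dist ν0 (fun y => f (Fin.cons y x)) (hfm.comp (hconsm x)) C
          (fun y => hfb _) (F 0 (Fin.cons 0 x))
        calc q x - (g x)^2 ≤ ∫ y, (f (Fin.cons y x) - F 0 (Fin.cons 0 x))^2 ∂ν0 := this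
          _ = ∫ y, (f (Fin.cons y x) - F 0 (Fin.cons y x))^2 ∂ν0 := by
            refine integral_congr_ae (ae_of_all _ fun y => ?_)
            simp only [hc0]
      have hqg : Integrable (fun x => q x - (g x)^2) π' :=
        (int_of_bound π' q hqm (C^2) hqb).sub (int_sq_of_bound π' g hgm C hgb)
      have hRm : Measurable (fun x => ∫ y, (f (Fin.cons y x) - F 0 (Fin.cons y x))^2 ∂ν0) :=
        meas_integral_cons n ν0 _ (hdiffm 0)
      have hRb : ∀ x, |∫ y, (f (Fin.cons y x) - F 0 (Fin.cons y x))^2 ∂ν0| ≤ (2*C)^2 :=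
        fun x => abs_integral_le_bound ν0 _ _ (by positivity) (fun y => hdiffb 0 _)
      have hmono := integral_mono hqg (int_of_bound π' _ hRm ((2*C)^2) hRb) ptw
      rw [integral_sub (int_of_bound π' q hqm (C^2) hqb)
        (int_sq_of_bound π' g hgm C hgb)] at hmono
      rw [hES 0]
      exact hmono
    -- step (iii) : induction hypothesis
    have step3 := IH ν' (fun i => hν _) C g hgm hgb G hGm hGb hGi
    -- step (iv)
    have step4 : ∀ i : Fin n, ∫ x, (g x - G i x)^2 ∂π' ≤ ∫ z, (f z - F i.succ z)^2 ∂π := by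
      intro i
      have ptw : ∀ x, (g x - G i x)^2
          ≤ ∫ y, (f (Fin.cons y x) - F i.succ (Fin.cons y x))^2 ∂ν0 := by
        intro x
        have hsub : g x - G i x
            = ∫ y, (f (Fin.cons y x) - F i.succ (Fin.cons y x)) ∂ν0 := by
          rw [integral_sub
            (int_of_bound ν0 (fun y => f (Fin.cons y x)) (hfm.comp (hconsm x)) C (fun y => hfb _))
            (int_of_bound ν0 (fun y => F i.succ (Fin.cons y x)) ((hFm i.succ).comp (hconsm x)) C
              (fun y => hFb _ _))]
        rw [hsub]
        exact jensen_sq ν0 _ ((hfm.sub (hFm i.succ)).comp (hconsm x)) (2*C)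
          (fun y => by
            calc |f (Fin.cons y x) - F i.succ (Fin.cons y x)|
                ≤ |f (Fin.cons y x)| + |F i.succ (Fin.cons y x)| := abs_sub _ _
              _ ≤ 2*C := by have := hfb (Fin.cons y x); have := hFb i.succ (Fin.cons y x); linarith)
      have hLm : Measurable (fun x => (g x - G i x)^2) := (hgm.sub (hGm i)).pow_const 2
      have hLb : ∀ x, |(g x - G i x)^2| ≤ (2*C)^2 := by
        intro x
        rw [abs_pow]
        refine pow_le_pow_left₀ (abs_nonneg _) ?_ 2
        calc |g x - G i x| ≤ |g x| + |G i x| := abs_sub _ _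
          _ ≤ 2*C := by have := hgb x; have := hGb i x; linarith
      have hRm : Measurable (fun x => ∫ y, (f (Fin.cons y x) - F i.succ (Fin.cons y x))^2 ∂ν0) :=
        meas_integral_cons n ν0 _ (hdiffm i.succ)
      have hRb : ∀ x, |∫ y, (f (Fin.cons y x) - F i.succ (Fin.cons y x))^2 ∂ν0| ≤ (2*C)^2 :=
        fun x => abs_integral_le_bound ν0 _ _ (by positivity) (fun y => hdiffb i.succ _)
      have hmono := integral_mono (int_of_bound π' _ hLm ((2*C)^2) hLb)
        (int_of_bound π' _ hRm ((2*C)^2) hRb) ptw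
      rw [hES i.succ]
      exact hmono
    -- assemble
    rw [Fin.sum_univ_succ, hA, hB]
    have hsum : ∑ i : Fin n, ∫ x, (g x - G i x)^2 ∂π'
        ≤ ∑ i : Fin n, ∫ z, (f z - F i.succ z)^2 ∂π :=
      Finset.sum_le_sum fun i _ => step4 i
    linarith [step2, step3, hsum]

lemma measurable_finset_sup' {ι α : Type*} [MeasurableSpace α] {s : Finset ι} (hs : s.Nonempty)
    (g : ι → α → ℝ) (hg : ∀ i, Measurable (g i)) :
    Measurable fun a => s.sup' hs fun i => g i a := by
  induction hs using Finset.Nonempty.cons_induction with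
  | singleton i => simpa using hg i
  | cons i s hi hs ih =>
    simp only [Finset.sup'_cons, hs]
    exact (hg i).max ih

section f0
variable {n : ℕ} (𝓕 : Finset (Finset (Fin n))) (hempty : ∅ ∈ 𝓕)

noncomputable def f0 (x : Fin n → ℝ) : ℝ := 𝓕.sup' ⟨∅, hempty⟩ (fun T => ∑ i ∈ T, x i)

lemma f0_meas : Measurable (f0 𝓕 hempty) := by
  unfold f0
  exact measurable_finset_sup' _ _ (fun T => Finset.measurable_sum T fun i _ => measurable_pi_apply i)

lemma f0_nonneg (x : Fin n → ℝ) : 0 ≤ f0 𝓕 hempty x := by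
  have := Finset.le_sup' (fun T => ∑ i ∈ T, x i) hempty
  simpa [f0] using this

lemma f0_le (x : Fin n → ℝ) (hx : ∀ i, x i ≤ 1) : f0 𝓕 hempty x ≤ n := by
  unfold f0
  refine Finset.sup'_le _ _ fun T hT => ?_
  calc ∑ i ∈ T, x i ≤ ∑ i ∈ T, (1:ℝ) := Finset.sum_le_sum fun i _ => hx i
    _ = T.card := by simp
    _ ≤ n := by exact_mod_cast le_trans (Finset.card_le_card (Finset.subset_univ T)) (by simp)

lemma f0_mono (x y : Fin n → ℝ) (h : ∀ i, x i ≤ y i) : f0 𝓕 hempty x ≤ f0 𝓕 hempty y := by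
  unfold f0
  refine Finset.sup'_le _ _ fun T hT => ?_
  exact le_trans (Finset.sum_le_sum fun i _ => h i) (Finset.le_sup' (fun S => ∑ i ∈ S, y i) hT)

lemma f0_key (hdc : ∀ S ∈ 𝓕, ∀ S' ⊆ S, S' ∈ 𝓕) (y : Fin n → ℝ)
    (hy : ∀ i, 0 ≤ y i ∧ y i ≤ 1) :
    ∑ i, (f0 𝓕 hempty y - f0 𝓕 hempty (Function.update y i 0))^2 ≤ f0 𝓕 hempty y := by
  obtain ⟨T, hT, hTeq⟩ := Finset.exists_mem_eq_sup' (⟨∅, hempty⟩ : 𝓕.Nonempty)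
    (fun T => ∑ i ∈ T, y i)
  have hTeq' : f0 𝓕 hempty y = ∑ i ∈ T, y i := hTeq
  set e : Fin n → ℝ := fun i => if i ∈ T then y i else 0 with he
  have hd_nonneg : ∀ i, 0 ≤ f0 𝓕 hempty y - f0 𝓕 hempty (Function.update y i 0) := by
    intro i
    have : f0 𝓕 hempty (Function.update y i 0) ≤ f0 𝓕 hempty y := by
      refine f0_mono 𝓕 hempty _ _ fun j => ?_
      by_cases hj : j = i
      · subst hj; simp [(hy j).1]
      · simp [Function.update_of_ne hj]
    linarith
  have hd_le : ∀ i, f0 𝓕 hempty y - f0 𝓕 hempty (Function.update y i 0) ≤ e i := by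
    intro i
    have h1 : ∑ j ∈ T.erase i, y j ≤ f0 𝓕 hempty (Function.update y i 0) := by
      have hmem : T.erase i ∈ 𝓕 := hdc T hT _ (Finset.erase_subset i T)
      have heq : ∑ j ∈ T.erase i, y j = ∑ j ∈ T.erase i, Function.update y i 0 j := by
        refine Finset.sum_congr rfl fun j hj => ?_
        rw [Function.update_of_ne (Finset.ne_of_mem_erase hj)]
      rw [heq]
      show _ ≤ 𝓕.sup' ⟨∅, hempty⟩ fun S => ∑ j ∈ S, Function.update y i 0 j
      exact Finset.le_sup' (fun S => ∑ j ∈ S, Function.update y i 0 j) hmem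
    have h2 : ∑ j ∈ T, y j - ∑ j ∈ T.erase i, y j = e i := by
      by_cases hi : i ∈ T
      · rw [← Finset.add_sum_erase T y hi]; simp [he, hi]
      · rw [Finset.erase_eq_of_notMem hi]; simp [he, hi]
    rw [hTeq']
    linarith
  have he01 : ∀ i, 0 ≤ e i ∧ e i ≤ 1 := by
    intro i
    by_cases hi : i ∈ T <;> simp [he, hi, (hy i).1, (hy i).2]
  calc ∑ i, (f0 𝓕 hempty y - f0 𝓕 hempty (Function.update y i 0))^2
      ≤ ∑ i, e i := Finset.sum_le_sum fun i _ => by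
        nlinarith [hd_nonneg i, hd_le i, (he01 i).1, (he01 i).2]
    _ = ∑ i ∈ T, y i := by
        rw [he]; rw [Finset.sum_ite_mem]; rw [Finset.univ_inter]
    _ = f0 𝓕 hempty y := hTeq'.symm
end f0

-- clamp
noncomputable def clmp (r : ℝ) : ℝ := max 0 (min r 1)

lemma clmp_meas : Measurable clmp := measurable_const.max (measurable_id.min measurable_const)
lemma clmp_zero : clmp 0 = 0 := by norm_num [clmp]
lemma clmp_nonneg (r : ℝ) : 0 ≤ clmp r := le_max_left _ _
lemma clmp_le_one (r : ℝ) : clmp r ≤ 1 := max_le (by norm_num) (min_le_right _ _)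
lemma clmp_eq (r : ℝ) (h0 : 0 ≤ r) (h1 : r ≤ 1) : clmp r = r := by
  rw [clmp, min_eq_left h1, max_eq_right h0]

-- measurable update
lemma measurable_update_zero {n : ℕ} (i : Fin n) :
    Measurable (fun x : Fin n → ℝ => Function.update x i 0) := by
  refine measurable_pi_iff.2 fun j => ?_
  by_cases hj : j = i
  · subst hj; simp only [Function.update_self]; exact measurable_const
  · simp only [Function.update_of_ne hj]; exact measurable_pi_apply j

lemma map_eq_pi {Ω : Type*} [MeasurableSpace Ω] (μ : Measure Ω) [IsProbabilityMeasure μ]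
    (n : ℕ) (t : Fin n → Ω → ℝ) (hmeas : ∀ i, Measurable (t i))
    (hindep : ProbabilityTheory.iIndepFun t μ) :
    Measure.map (fun ω i => t i ω) μ = Measure.pi (fun i => Measure.map (t i) μ) := by
  haveI : ∀ i, IsProbabilityMeasure (Measure.map (t i) μ) :=
    fun i => Measure.isProbabilityMeasure_map (hmeas i).aemeasurable
  refine (Measure.pi_eq (μ := fun i => Measure.map (t i) μ) fun s hs => ?_).symm
  have hT : Measurable (fun ω i => t i ω) := measurable_pi_lambda _ hmeas
  rw [Measure.map_apply hT (MeasurableSet.univ_pi hs)]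
  have hpre : (fun ω i => t i ω) ⁻¹' Set.pi Set.univ s = ⋂ i ∈ Finset.univ, t i ⁻¹' s i := by
    ext ω; simp [Set.mem_pi]
  rw [hpre, hindep.measure_inter_preimage_eq_mul Finset.univ (fun i _ => hs i)]
  exact Finset.prod_congr rfl fun i _ => (Measure.map_apply (hmeas i) (hs i)).symm

/-- For independent random variables valued in `{0} ∪ [1/2, 1]` and a downward-closed
family `𝓕` containing `∅`, the maximum-weight feasible set value
`Z(t) = max_{T ∈ 𝓕} ∑_{i ∈ T} t_i` satisfies `Var[Z] ≤ E[Z]`. -/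
theorem stmt3 {Ω : Type*} [MeasurableSpace Ω] (μ : Measure Ω) [IsProbabilityMeasure μ]
    (n : ℕ) (t : Fin n → Ω → ℝ)
    (hmeas : ∀ i, Measurable (t i))
    (hindep : ProbabilityTheory.iIndepFun t μ)
    (hval : ∀ i ω, t i ω = 0 ∨ t i ω ∈ Set.Icc (1/2 : ℝ) 1)
    (𝓕 : Finset (Finset (Fin n))) (hempty : ∅ ∈ 𝓕)
    (hdc : ∀ S ∈ 𝓕, ∀ S' ⊆ S, S' ∈ 𝓕)
    (Z : Ω → ℝ)
    (hZ : ∀ ω, Z ω = 𝓕.sup' ⟨∅, hempty⟩ (fun T => ∑ i ∈ T, t i ω)) :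
    ProbabilityTheory.variance Z μ ≤ ∫ ω, Z ω ∂μ := by
  haveI : ∀ i, IsProbabilityMeasure (Measure.map (t i) μ) :=
    fun i => Measure.isProbabilityMeasure_map (hmeas i).aemeasurable
  set ν : Fin n → Measure ℝ := fun i => Measure.map (t i) μ with hν
  set π := Measure.pi ν with hπ
  set Fb : (Fin n → ℝ) → ℝ := fun x => f0 𝓕 hempty (fun i => clmp (x i)) with hFb'
  set Fi : Fin n → (Fin n → ℝ) → ℝ := fun i x => Fb (Function.update x i 0) with hFi'
  have hclm : Measurable (fun x : Fin n → ℝ => (fun i => clmp (x i))) :=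
    measurable_pi_lambda _ fun i => clmp_meas.comp (measurable_pi_apply i)
  have hFm : Measurable Fb := (f0_meas 𝓕 hempty).comp hclm
  have hFbdd : ∀ x, |Fb x| ≤ (n:ℝ) := by
    intro x
    rw [abs_le]
    refine ⟨?_, f0_le 𝓕 hempty _ (fun i => clmp_le_one _)⟩
    have h1 := f0_nonneg 𝓕 hempty (fun i => clmp (x i))
    have h2 : (0:ℝ) ≤ n := Nat.cast_nonneg n
    simp only [hFb']
    linarith
  have hFim : ∀ i, Measurable (Fi i) := fun i => hFm.comp (measurable_update_zero i)
  have hFib : ∀ i x, |Fi i x| ≤ (n:ℝ) := fun i x => hFbdd _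
  have hFii : ∀ i x a, Fi i (Function.update x i a) = Fi i x := by
    intro i x a; simp only [hFi', Function.update_idem]
  have hupd : ∀ (x : Fin n → ℝ) (i : Fin n),
      (fun j => clmp (Function.update x i 0 j)) = Function.update (fun j => clmp (x j)) i 0 := by
    intro x i; funext j; by_cases hj : j = i
    · subst hj; simp [clmp_zero]
    · simp [Function.update_of_ne hj]
  have hkey : ∀ x, ∑ i, (Fb x - Fi i x)^2 ≤ Fb x := by
    intro x
    have h := f0_key 𝓕 hempty hdc (fun i => clmp (x i))
      (fun i => ⟨clmp_nonneg _, clmp_le_one _⟩)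
    simp only [hFi', hFb', hupd]
    exact h
  -- transfer to the product space
  set T : Ω → (Fin n → ℝ) := fun ω i => t i ω with hT'
  have hTm : Measurable T := measurable_pi_lambda _ hmeas
  have hmap : Measure.map T μ = π := map_eq_pi μ n t hmeas hindep
  have ht01 : ∀ i ω, 0 ≤ t i ω ∧ t i ω ≤ 1 := by
    intro i ω; rcases hval i ω with h | h
    · rw [h]; norm_num
    · exact ⟨le_trans (by norm_num) h.1, h.2⟩
  have hZeq : Z = fun ω => Fb (T ω) := by
    funext ω
    rw [hZ]
    have hcl : (fun i => clmp (T ω i)) = fun i => t i ω := by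
      funext i; exact clmp_eq _ (ht01 i ω).1 (ht01 i ω).2
    show 𝓕.sup' ⟨∅, hempty⟩ (fun T => ∑ i ∈ T, t i ω)
        = f0 𝓕 hempty (fun i => clmp (T ω i))
    rw [hcl]
    rfl
  have hZm : Measurable Z := by rw [hZeq]; exact hFm.comp hTm
  have hZb : ∀ ω, ‖Z ω‖ ≤ (n:ℝ) := by
    intro ω
    rw [hZeq]
    simpa [Real.norm_eq_abs] using hFbdd (T ω)
  have hmem : MeasureTheory.MemLp Z 2 μ :=
    (memLp_top_of_bound hZm.aestronglyMeasurable _ (ae_of_all _ hZb)).mono_exponent le_top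
  rw [ProbabilityTheory.variance_eq_sub hmem]
  have h1 : ∫ ω, Z ω ∂μ = ∫ x, Fb x ∂π := by
    rw [hZeq, ← hmap, integral_map hTm.aemeasurable hFm.aestronglyMeasurable]
  have h2 : ∫ ω, (Z ω)^2 ∂μ = ∫ x, (Fb x)^2 ∂π := by
    rw [hZeq, ← hmap, integral_map hTm.aemeasurable ((hFm.pow_const 2).aestronglyMeasurable)]
  have hES := efron_stein n ν (fun i => inferInstance) (n:ℝ) Fb hFm hFbdd Fi hFim hFib hFii
  have hdm : ∀ i : Fin n, Measurable (fun x => (Fb x - Fi i x)^2) :=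
    fun i => (hFm.sub (hFim i)).pow_const 2
  have hdb : ∀ (i : Fin n) x, |(Fb x - Fi i x)^2| ≤ (2*(n:ℝ))^2 := by
    intro i x
    rw [abs_pow]
    refine pow_le_pow_left₀ (abs_nonneg _) ?_ 2
    calc |Fb x - Fi i x| ≤ |Fb x| + |Fi i x| := abs_sub _ _
      _ ≤ 2*(n:ℝ) := by have := hFbdd x; have := hFib i x; linarith
  have hsum : ∑ i, ∫ x, (Fb x - Fi i x)^2 ∂π ≤ ∫ x, Fb x ∂π := by
    rw [← integral_finset_sum _ (fun i _ => int_of_bound π _ (hdm i) ((2*(n:ℝ))^2) (hdb i))]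
    refine integral_mono ?_ (int_of_bound π Fb hFm (n:ℝ) hFbdd) hkey
    exact integrable_finset_sum _ (fun i _ => int_of_bound π _ (hdm i) ((2*(n:ℝ))^2) (hdb i))
  simp only [Pi.pow_apply]
  rw [h2, h1]
  linarith
end

section
/- Let $q_1, \ldots, q_n \in [0, 1]$ with $\sum_{j=1}^n q_j \leq 1$, fixing $i \in [n]$. Define $\hat{x}_i = \frac{q_i}{2} \cdot \prod_{j \neq i} \left(1 - \frac{q_j}{2}\right)$. Then $\frac{q_i + q_i^2}{4} \leq \hat{x}_i \leq \frac{q_i}{2}$. -/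
lemma weierstrass {ι : Type*} (s : Finset ι) (f : ι → ℝ) (h0 : ∀ j ∈ s, 0 ≤ f j)
    (h1 : ∀ j ∈ s, f j ≤ 1) : 1 - ∑ j ∈ s, f j ≤ ∏ j ∈ s, (1 - f j) := by
  classical
  induction s using Finset.induction_on with
  | empty => simp
  | @insert a s' hx ih =>
    rw [Finset.sum_insert hx, Finset.prod_insert hx]
    have h0' : ∀ j ∈ s', 0 ≤ f j := fun j hj => h0 j (Finset.mem_insert_of_mem hj)
    have h1' : ∀ j ∈ s', f j ≤ 1 := fun j hj => h1 j (Finset.mem_insert_of_mem hj)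
    have ihs := ih h0' h1'
    have ha0 := h0 a (Finset.mem_insert_self a s')
    have ha1 := h1 a (Finset.mem_insert_self a s')
    have hs0 : 0 ≤ ∑ j ∈ s', f j := Finset.sum_nonneg h0'
    nlinarith [ihs]

/-- Allocation coupling bound for the SAPP mechanism: with `q ∈ [0,1]ⁿ`, `∑ q ≤ 1`,
the trade probability `x̂ᵢ = (qᵢ/2) ∏_{j≠i}(1 - qⱼ/2)` satisfies
`(qᵢ + qᵢ²)/4 ≤ x̂ᵢ ≤ qᵢ/2`. -/
theorem stmt7 (n : ℕ) (q : Fin n → ℝ) (hq : ∀ i, q i ∈ Set.Icc (0:ℝ) 1)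
    (hsum : ∑ j, q j ≤ 1) (i : Fin n)
    (xhat : ℝ)
    (hxhat : xhat = q i / 2 * ∏ j ∈ Finset.univ.erase i, (1 - q j / 2)) :
    (q i + (q i)^2) / 4 ≤ xhat ∧ xhat ≤ q i / 2 := by
  have hqi := hq i
  have hq0 : 0 ≤ q i := hqi.1
  have hprod_le : ∏ j ∈ Finset.univ.erase i, (1 - q j / 2) ≤ 1 := by
    apply Finset.prod_le_one
    · intro j _; linarith [(hq j).1, (hq j).2]
    · intro j _; linarith [(hq j).1]
  have hsum_erase : ∑ j ∈ Finset.univ.erase i, q j = ∑ j, q j - q i := by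
    rw [Finset.sum_erase_eq_sub (Finset.mem_univ i)]
  have hlow : 1 - ∑ j ∈ Finset.univ.erase i, q j / 2 ≤
      ∏ j ∈ Finset.univ.erase i, (1 - q j / 2) := by
    apply weierstrass
    · intro j _; linarith [(hq j).1]
    · intro j _; linarith [(hq j).2]
  have hsum2 : ∑ j ∈ Finset.univ.erase i, q j / 2 = (∑ j, q j - q i) / 2 := by
    rw [← Finset.sum_div, hsum_erase]
  rw [hsum2] at hlow
  constructor
  · rw [hxhat]
    have h1 : (1 + q i) / 2 ≤ ∏ j ∈ Finset.univ.erase i, (1 - q j / 2) := by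
      have : 1 - (∑ j, q j - q i) / 2 ≥ (1 + q i) / 2 := by linarith
      linarith
    nlinarith
  · rw [hxhat]
    have hprod0 : 0 ≤ ∏ j ∈ Finset.univ.erase i, (1 - q j / 2) := by
      apply Finset.prod_nonneg; intro j _; linarith [(hq j).2]
    nlinarith
end

section
/- Let $b$ be a continuous real-valued random variable with CDF $F$, density $f$, and monotone non-decreasing ironed virtual value function $\widetilde{\varphi}$. Then for any $p$ in the support, $\int_p^\infty \widetilde{\varphi}(x) f(x)\,dx = p \cdot (1 - F(p))$. -/
open MeasureTheory

/-- Myerson's lemma identity: the expected (monotone) virtual value above a price `p`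
equals the revenue of posting price `p`: `∫_p^∞ φ(x) f(x) dx = p (1 - F(p))`,
where `φ(x) = x - (1 - F(x))/f(x)`. -/
theorem stmt10 (F f : ℝ → ℝ) (hderiv : ∀ x, HasDerivAt F (f x) x)
    (hfpos : ∀ x, 0 < f x)
    (hF1 : Filter.Tendsto F Filter.atTop (nhds 1))
    (hmono : Monotone (fun x => x - (1 - F x) / f x))
    (htail : Filter.Tendsto (fun x => x * (1 - F x)) Filter.atTop (nhds 0))
    (p : ℝ)
    (hint : IntegrableOn (fun x => (x - (1 - F x) / f x) * f x) (Set.Ioi p)) :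
    ∫ x in Set.Ioi p, (x - (1 - F x) / f x) * f x = p * (1 - F p) := by
  have hEq : ∀ x, (x - (1 - F x) / f x) * f x = x * f x - (1 - F x) := by
    intro x
    field_simp [(hfpos x).ne']
  have hg : ∀ x ∈ Set.Ici p, HasDerivAt (fun x => -(x * (1 - F x)))
      ((x - (1 - F x) / f x) * f x) x := by
    intro x _
    have h1 : HasDerivAt (fun x => x * (1 - F x)) (1 * (1 - F x) + x * (0 - f x)) x :=
      (hasDerivAt_id x).mul ((hasDerivAt_const x 1).sub (hderiv x))
    have : HasDerivAt (fun x => -(x * (1 - F x))) (-(1 * (1 - F x) + x * (0 - f x))) x := h1.neg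
    convert this using 1
    rw [hEq]; ring
  have hcont : ContinuousWithinAt (fun x => -(x * (1 - F x))) (Set.Ici p) p :=
    (hg p (Set.self_mem_Ici)).continuousAt.continuousWithinAt
  have hlim : Filter.Tendsto (fun x => -(x * (1 - F x))) Filter.atTop (nhds 0) := by
    simpa using htail.neg
  have := integral_Ioi_of_hasDerivAt_of_tendsto hcont (fun x hx => hg x (Set.mem_Ici.mpr (le_of_lt hx))) hint hlim
  rw [this]; ring
end

section
/- Let $v_1, \ldots, v_n$ be nonnegative random variables (not necessarily independent as a vector, but the claim is about a fixed coupling), let $\mathcal{F} \subseteq 2^{[n]}$ be a family of feasible sets, let $\hat{S}(v) \in \argmax_{S \in \mathcal{F}} \sum_{i \in S} v_i$ be measurable, and for each $i$ let $q_i = \Pr[i \in \hat{S}(v)]$ and let $\xi_i \geq 0$ satisfy $\Pr[v_i \geq \xi_i] = q_i$. If $v_1, \ldots, v_n$ are mutually independent, then $\mathbb{E}\left[\max_{S \in \mathcal{F}} \sum_{i \in S} v_i\right] \leq \sum_{i=1}^n \mathbb{E}[v_i \cdot \mathbb{1}[v_i \geq \xi_i]]$. -/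
open MeasureTheory

lemma key12 {Ω : Type*} [MeasurableSpace Ω] (μ : Measure Ω) [IsFiniteMeasure μ]
    (v : Ω → ℝ) (hv : Measurable v) (hint : Integrable v μ)
    (ξ : ℝ) (A : Set Ω) (hA : MeasurableSet A)
    (hq : μ A = μ {ω | ξ ≤ v ω}) :
    ∫ ω in A, v ω ∂μ ≤ ∫ ω in {ω | ξ ≤ v ω}, v ω ∂μ := by
  set B : Set Ω := {ω | ξ ≤ v ω} with hBdef
  have hB : MeasurableSet B := measurableSet_le measurable_const hv
  have hIA : IntegrableOn v A μ := hint.integrableOn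
  have hIB : IntegrableOn v B μ := hint.integrableOn
  have h1 : ∫ ω in A ∩ B, v ω ∂μ + ∫ ω in A \ B, v ω ∂μ = ∫ ω in A, v ω ∂μ :=
    integral_inter_add_diff hB hIA
  have h2 : ∫ ω in B ∩ A, v ω ∂μ + ∫ ω in B \ A, v ω ∂μ = ∫ ω in B, v ω ∂μ :=
    integral_inter_add_diff hA hIB
  have hmeq : μ (A \ B) = μ (B \ A) := by
    have e1 : μ (A ∩ B) + μ (A \ B) = μ A := measure_inter_add_diff A hB
    have e2 : μ (B ∩ A) + μ (B \ A) = μ B := measure_inter_add_diff B hA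
    rw [Set.inter_comm] at e2
    have := e1.trans (hq.trans e2.symm)
    exact (ENNReal.add_right_inj (measure_ne_top μ _)).mp this
  have hub : ∫ ω in A \ B, v ω ∂μ ≤ ξ * (μ (A \ B)).toReal := by
    have : ∫ ω in A \ B, v ω ∂μ ≤ ∫ _ω in A \ B, ξ ∂μ := by
      refine setIntegral_mono_on (hIA.mono_set Set.diff_subset)
        (integrableOn_const (measure_ne_top μ _)) (hA.diff hB) ?_
      intro x hx
      exact le_of_lt (lt_of_not_ge hx.2)
    simpa [smul_eq_mul, mul_comm, Measure.real] using this
  have hlb : ξ * (μ (B \ A)).toReal ≤ ∫ ω in B \ A, v ω ∂μ := by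
    have := setIntegral_ge_of_const_le (hB.diff hA) (measure_ne_top μ _)
      (fun x hx => hx.1) (hIB.mono_set Set.diff_subset)
    simpa [smul_eq_mul, mul_comm, Measure.real] using this
  calc ∫ ω in A, v ω ∂μ = ∫ ω in A ∩ B, v ω ∂μ + ∫ ω in A \ B, v ω ∂μ := h1.symm
    _ ≤ ∫ ω in A ∩ B, v ω ∂μ + ξ * (μ (A \ B)).toReal := by linarith
    _ = ∫ ω in B ∩ A, v ω ∂μ + ξ * (μ (B \ A)).toReal := by rw [Set.inter_comm, hmeq]
    _ ≤ ∫ ω in B ∩ A, v ω ∂μ + ∫ ω in B \ A, v ω ∂μ := by linarith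
    _ = ∫ ω in B, v ω ∂μ := h2

/-- The expected maximum-weight feasible set is bounded by the sum over items of
the expectation of `vᵢ` restricted to its top `qᵢ`-quantile, where
`qᵢ = Pr[i ∈ Ŝ(v)]`. -/
theorem stmt12 {Ω : Type*} [MeasurableSpace Ω] (μ : Measure Ω) [IsProbabilityMeasure μ]
    (n : ℕ) (v : Fin n → Ω → ℝ) (hmeas : ∀ i, Measurable (v i))
    (hnn : ∀ i ω, 0 ≤ v i ω) (hint : ∀ i, Integrable (v i) μ)
    (hindep : ProbabilityTheory.iIndepFun v μ)
    (𝓕 : Finset (Finset (Fin n))) (h𝓕 : 𝓕.Nonempty)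
    (Shat : Ω → Finset (Fin n))
    (hSmem : ∀ ω, Shat ω ∈ 𝓕)
    (hSopt : ∀ ω, ∀ T ∈ 𝓕, ∑ i ∈ T, v i ω ≤ ∑ i ∈ Shat ω, v i ω)
    (hSmeas : ∀ i, MeasurableSet {ω | i ∈ Shat ω})
    (q ξ : Fin n → ℝ)
    (hq : ∀ i, q i = (μ {ω | i ∈ Shat ω}).toReal)
    (hξnn : ∀ i, 0 ≤ ξ i)
    (hξ : ∀ i, (μ {ω | ξ i ≤ v i ω}).toReal = q i) :
    ∫ ω, 𝓕.sup' h𝓕 (fun T => ∑ i ∈ T, v i ω) ∂μ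
      ≤ ∑ i, ∫ ω, (if ξ i ≤ v i ω then v i ω else 0) ∂μ := by
  have hBmeas : ∀ i, MeasurableSet {ω | ξ i ≤ v i ω} :=
    fun i => measurableSet_le measurable_const (hmeas i)
  -- rewrite the sup as a sum of indicators
  have hsup : ∀ ω, 𝓕.sup' h𝓕 (fun T => ∑ i ∈ T, v i ω)
      = ∑ i, Set.indicator {ω | i ∈ Shat ω} (v i) ω := by
    intro ω
    have h1 : 𝓕.sup' h𝓕 (fun T => ∑ i ∈ T, v i ω) = ∑ i ∈ Shat ω, v i ω := by
      exact le_antisymm (Finset.sup'_le _ _ fun T hT => hSopt ω T hT)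
        (Finset.le_sup' (f := fun T => ∑ i ∈ T, v i ω) (hSmem ω))
    rw [h1, show (∑ i, Set.indicator {ω | i ∈ Shat ω} (v i) ω)
        = ∑ i : Fin n, if i ∈ Shat ω then v i ω else 0 from
      Finset.sum_congr rfl (fun i _ => by simp [Set.indicator_apply, Set.mem_setOf_eq]),
      Finset.sum_ite_mem, Finset.univ_inter]
  have hintI : ∀ i, Integrable (Set.indicator {ω | i ∈ Shat ω} (v i)) μ :=
    fun i => (hint i).indicator (hSmeas i)
  calc ∫ ω, 𝓕.sup' h𝓕 (fun T => ∑ i ∈ T, v i ω) ∂μ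
      = ∫ ω, ∑ i, Set.indicator {ω | i ∈ Shat ω} (v i) ω ∂μ := by
        exact integral_congr_ae (.of_forall hsup)
    _ = ∑ i, ∫ ω, Set.indicator {ω | i ∈ Shat ω} (v i) ω ∂μ :=
        integral_finset_sum _ (fun i _ => hintI i)
    _ ≤ ∑ i, ∫ ω, (if ξ i ≤ v i ω then v i ω else 0) ∂μ := by
        refine Finset.sum_le_sum fun i _ => ?_
        have hAB : μ {ω | i ∈ Shat ω} = μ {ω | ξ i ≤ v i ω} := by
          have := (hξ i).trans (hq i)
          exact ((ENNReal.toReal_eq_toReal_iff' (measure_ne_top μ _)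
            (measure_ne_top μ _)).mp this).symm
        have hk := key12 μ (v i) (hmeas i) (hint i) (ξ i) _ (hSmeas i) hAB
        rw [integral_indicator (hSmeas i)]
        have : ∫ ω, (if ξ i ≤ v i ω then v i ω else 0) ∂μ
            = ∫ ω in {ω | ξ i ≤ v i ω}, v i ω ∂μ := by
          rw [← integral_indicator (hBmeas i)]
          congr 1
        rw [this]
        exact hk
end

section
/- Prophet inequality threshold guarantee: Let $v_1, \ldots, v_n$ be independent nonnegative random variables and set the threshold $\xi = \frac{1}{2} \mathbb{E}[\max_i v_i]$. Consider the stopping rule that accepts the first $i$ (in index order) with $v_i \geq \xi$. Then the expected value of the accepted variable is at least $\frac{1}{2} \mathbb{E}[\max_i v_i]$. -/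
open MeasureTheory

/-- Fixed-threshold prophet inequality: with threshold `ξ = E[maxᵢ vᵢ]/2`, the stopping
rule accepting the first `i` with `vᵢ ≥ ξ` earns at least `E[maxᵢ vᵢ]/2` in expectation. -/
theorem stmt13 {Ω : Type*} [MeasurableSpace Ω] (μ : Measure Ω) [IsProbabilityMeasure μ]
    (n : ℕ) (hne : (Finset.univ : Finset (Fin n)).Nonempty)
    (v : Fin n → Ω → ℝ)
    (hmeas : ∀ i, Measurable (v i)) (hnn : ∀ i ω, 0 ≤ v i ω)
    (hint : ∀ i, Integrable (v i) μ)
    (hindep : ProbabilityTheory.iIndepFun v μ)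
    (ξ : ℝ)
    (hξ : ξ = (1/2) * ∫ ω, Finset.univ.sup' hne (fun i => v i ω) ∂μ)
    (reward : Ω → ℝ)
    (hreward : ∀ ω, reward ω =
      if h : (Finset.univ.filter (fun i => ξ ≤ v i ω)).Nonempty
      then v ((Finset.univ.filter (fun i => ξ ≤ v i ω)).min' h) ω
      else 0) :
    (1/2) * ∫ ω, Finset.univ.sup' hne (fun i => v i ω) ∂μ
      ≤ ∫ ω, reward ω ∂μ := by
  classical
  rw [← hξ]
  set M : Ω → ℝ := fun ω => Finset.univ.sup' hne (fun i => v i ω) with hM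
  have hMmeas : Measurable M := by
    have := Finset.measurable_sup' hne (fun i _ => hmeas i)
    convert this using 1
    funext ω
    simp [hM, Finset.sup'_apply]
  have hMnn : ∀ ω, 0 ≤ M ω := fun ω =>
    le_trans (hnn hne.choose ω)
      (Finset.le_sup' (fun i => v i ω) (Finset.mem_univ hne.choose))
  have hMle : ∀ ω, M ω ≤ ∑ i, v i ω := by
    intro ω
    exact Finset.sup'_le _ _ fun i _ =>
      Finset.single_le_sum (fun j _ => hnn j ω) (Finset.mem_univ i)
  have hMint : Integrable M μ := by
    refine (integrable_finset_sum Finset.univ fun i _ => hint i).mono'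
      hMmeas.aestronglyMeasurable ?_
    filter_upwards with ω
    rw [Real.norm_eq_abs, abs_of_nonneg (hMnn ω)]
    exact hMle ω
  have hξ0 : 0 ≤ ξ := by
    rw [hξ]
    have : 0 ≤ ∫ ω, M ω ∂μ := integral_nonneg fun ω => hMnn ω
    linarith
  -- events
  set A : Set Ω := {ω | ∃ i, ξ ≤ v i ω} with hA
  set F : Fin n → Set Ω := fun i => {ω | ξ ≤ v i ω ∧ ∀ j, j < i → v j ω < ξ} with hF
  set G : Fin n → Set Ω := fun i => {ω | ∀ j, j ≠ i → v j ω < ξ} with hG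
  have hAmeas : MeasurableSet A := by
    have : A = ⋃ i, {ω | ξ ≤ v i ω} := by ext ω; simp [hA]
    rw [this]
    exact MeasurableSet.iUnion fun i => measurableSet_le measurable_const (hmeas i)
  have hFmeas : ∀ i, MeasurableSet (F i) := by
    intro i
    have : F i = {ω | ξ ≤ v i ω} ∩ ⋂ j, ⋂ (_ : j < i), {ω | v j ω < ξ} := by
      ext ω; simp [hF]
    rw [this]
    exact (measurableSet_le measurable_const (hmeas i)).inter
      (MeasurableSet.iInter fun j => MeasurableSet.iInter fun _ =>
        measurableSet_lt (hmeas j) measurable_const)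
  have hGmeas : ∀ i, MeasurableSet (G i) := by
    intro i
    have : G i = ⋂ j, ⋂ (_ : j ≠ i), {ω | v j ω < ξ} := by
      ext ω; simp [hG]
    rw [this]
    exact MeasurableSet.iInter fun j => MeasurableSet.iInter fun _ =>
      measurableSet_lt (hmeas j) measurable_const
  -- pointwise decomposition of reward
  have hdecomp : ∀ ω, reward ω =
      A.indicator (fun _ => ξ) ω + ∑ i, (F i).indicator (fun ω => v i ω - ξ) ω := by
    intro ω
    rw [hreward ω]
    by_cases h : (Finset.univ.filter (fun i => ξ ≤ v i ω)).Nonempty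
    · rw [dif_pos h]
      set i₀ := (Finset.univ.filter (fun i => ξ ≤ v i ω)).min' h with hi₀
      have hi₀mem : i₀ ∈ Finset.univ.filter (fun i => ξ ≤ v i ω) := Finset.min'_mem _ _
      have hi₀le : ξ ≤ v i₀ ω := (Finset.mem_filter.mp hi₀mem).2
      have hFi₀ : ω ∈ F i₀ := by
        refine ⟨hi₀le, fun j hj => ?_⟩
        by_contra hc
        push_neg at hc
        exact absurd (Finset.min'_le _ j
          (Finset.mem_filter.mpr ⟨Finset.mem_univ _, hc⟩)) (not_le.mpr hj)
      have hAω : ω ∈ A := ⟨i₀, hi₀le⟩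
      have hsum : ∑ i, (F i).indicator (fun ω => v i ω - ξ) ω = v i₀ ω - ξ := by
        rw [Finset.sum_eq_single i₀]
        · rw [Set.indicator_of_mem hFi₀]
        · intro j _ hj
          rw [Set.indicator_of_notMem]
          intro hFj
          rcases lt_or_gt_of_ne hj with h1 | h1
          · exact absurd (Finset.min'_le _ j
              (Finset.mem_filter.mpr ⟨Finset.mem_univ _, hFj.1⟩)) (not_le.mpr h1)
          · exact absurd hi₀le (not_le.mpr (hFj.2 i₀ h1))
        · simp
      rw [hsum, Set.indicator_of_mem hAω]
      ring
    · rw [dif_neg h]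
      have hnotA : ω ∉ A := by
        rintro ⟨i, hi⟩
        exact h ⟨i, Finset.mem_filter.mpr ⟨Finset.mem_univ _, hi⟩⟩
      have hnotF : ∀ i, ω ∉ F i := by
        intro i hFi
        exact h ⟨i, Finset.mem_filter.mpr ⟨Finset.mem_univ _, hFi.1⟩⟩
      rw [Set.indicator_of_notMem hnotA, Finset.sum_eq_zero
        (fun i _ => Set.indicator_of_notMem (hnotF i) _)]
      ring
  -- integrability
  have hFint : ∀ i, Integrable ((F i).indicator (fun ω => v i ω - ξ)) μ :=
    fun i => ((hint i).sub (integrable_const ξ)).indicator (hFmeas i)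
  have hAint : Integrable (A.indicator (fun _ => ξ)) μ :=
    (integrable_const ξ).indicator hAmeas
  have hXint : ∀ i, Integrable (fun ω => max (v i ω - ξ) 0) μ :=
    fun i => ((hint i).sub (integrable_const ξ)).pos_part
  have hYint : ∀ i, Integrable ((G i).indicator (fun _ => (1 : ℝ))) μ :=
    fun i => (integrable_const 1).indicator (hGmeas i)
  -- integral of reward
  have hIr : ∫ ω, reward ω ∂μ =
      ξ * (μ A).toReal + ∑ i, ∫ ω, (F i).indicator (fun ω => v i ω - ξ) ω ∂μ := by
    rw [integral_congr_ae (Filter.Eventually.of_forall hdecomp),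
      integral_add hAint (integrable_finset_sum _ fun i _ => hFint i),
      integral_finset_sum _ (fun i _ => hFint i),
      integral_indicator_const _ hAmeas, smul_eq_mul, mul_comm]
    rfl
  -- independence of (vᵢ - ξ)⁺ and the indicator of G i
  have hindepXY : ∀ i, ProbabilityTheory.IndepFun (fun ω => max (v i ω - ξ) 0)
      ((G i).indicator (fun _ => (1 : ℝ))) μ := by
    intro i
    have hd : Disjoint ({i} : Finset (Fin n)) ({i}ᶜ) := disjoint_compl_right
    have h1 := hindep.indepFun_finset {i} {i}ᶜ hd hmeas
    have hφ : Measurable fun x : ({i} : Finset (Fin n)) → ℝ =>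
        max (x ⟨i, Finset.mem_singleton_self i⟩ - ξ) 0 :=
      ((measurable_pi_apply _).sub measurable_const).max measurable_const
    have hsetm : MeasurableSet {x : (({i}ᶜ : Finset (Fin n)) : Type) → ℝ | ∀ j, x j < ξ} := by
      have : {x : (({i}ᶜ : Finset (Fin n)) : Type) → ℝ | ∀ j, x j < ξ} =
          ⋂ j, {x | x j < ξ} := by ext x; simp
      rw [this]
      exact MeasurableSet.iInter fun j =>
        measurableSet_lt (measurable_pi_apply j) measurable_const
    have hψ : Measurable fun x : (({i}ᶜ : Finset (Fin n)) : Type) → ℝ =>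
        Set.indicator {x | ∀ j, x j < ξ} (fun _ => (1 : ℝ)) x :=
      Measurable.indicator measurable_const hsetm
    have h2 := h1.comp hφ hψ
    have heqL : (fun x : ({i} : Finset (Fin n)) → ℝ =>
        max (x ⟨i, Finset.mem_singleton_self i⟩ - ξ) 0) ∘
        (fun ω (j : ({i} : Finset (Fin n))) => v j ω) =
        fun ω => max (v i ω - ξ) 0 := rfl
    have heqR : (fun x : (({i}ᶜ : Finset (Fin n)) : Type) → ℝ =>
        Set.indicator {x | ∀ j, x j < ξ} (fun _ => (1 : ℝ)) x) ∘
        (fun ω (j : (({i}ᶜ : Finset (Fin n)) : Type)) => v j ω) =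
        (G i).indicator (fun _ => (1 : ℝ)) := by
      funext ω
      by_cases hg : ω ∈ G i
      · rw [Function.comp_apply, Set.indicator_of_mem, Set.indicator_of_mem hg]
        intro j
        exact hg j.1 (Finset.notMem_singleton.mp (Finset.mem_compl.mp j.2))
      · rw [Function.comp_apply, Set.indicator_of_notMem, Set.indicator_of_notMem hg]
        intro hmem
        apply hg
        intro j hj
        exact hmem ⟨j, Finset.mem_compl.mpr (Finset.notMem_singleton.mpr hj)⟩
    rw [heqL, heqR] at h2
    exact h2
  -- factorize the integral over G i
  have hGint : ∀ i, ∫ ω, max (v i ω - ξ) 0 * (G i).indicator (fun _ => (1 : ℝ)) ω ∂μ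
      = (∫ ω, max (v i ω - ξ) 0 ∂μ) * (μ (G i)).toReal := by
    intro i
    have h := (hindepXY i).integral_mul_eq_mul_integral (hXint i).1 (hYint i).1
    rw [integral_indicator_const _ (hGmeas i), smul_eq_mul, mul_one] at h
    exact h
  -- pointwise lower bound per i
  have hpt : ∀ i ω, max (v i ω - ξ) 0 * (G i).indicator (fun _ => (1 : ℝ)) ω
      ≤ (F i).indicator (fun ω => v i ω - ξ) ω := by
    intro i ω
    by_cases hg : ω ∈ G i
    · rw [Set.indicator_of_mem hg, mul_one]
      by_cases hv : ξ ≤ v i ω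
      · have hFi : ω ∈ F i := ⟨hv, fun j hj => hg j (ne_of_lt hj)⟩
        rw [Set.indicator_of_mem hFi, max_eq_left (by linarith)]
      · rw [max_eq_right (by linarith)]
        exact Set.indicator_nonneg (fun a ha => sub_nonneg.mpr ha.1) ω
    · rw [Set.indicator_of_notMem hg, mul_zero]
      exact Set.indicator_nonneg (fun a ha => sub_nonneg.mpr ha.1) ω
  -- p := P(no crosser)
  set p : ℝ := (μ Aᶜ).toReal with hp
  have hp0 : 0 ≤ p := ENNReal.toReal_nonneg
  have hpA : (μ A).toReal + p = 1 := by
    rw [hp, ← ENNReal.toReal_add (measure_ne_top μ _) (measure_ne_top μ _),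
      measure_add_measure_compl hAmeas, measure_univ, ENNReal.toReal_one]
  have hGp : ∀ i, p ≤ (μ (G i)).toReal := by
    intro i
    apply ENNReal.toReal_mono (measure_ne_top μ _)
    apply measure_mono
    intro ω hω
    simp only [Set.mem_compl_iff, hA, Set.mem_setOf_eq] at hω
    push_neg at hω
    exact fun j _ => hω j
  have hXnn : ∀ i, 0 ≤ ∫ ω, max (v i ω - ξ) 0 ∂μ :=
    fun i => integral_nonneg fun ω => le_max_right _ _
  -- per-i bound
  have hFi_lb : ∀ i, (∫ ω, max (v i ω - ξ) 0 ∂μ) * p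
      ≤ ∫ ω, (F i).indicator (fun ω => v i ω - ξ) ω ∂μ := by
    intro i
    calc (∫ ω, max (v i ω - ξ) 0 ∂μ) * p
        ≤ (∫ ω, max (v i ω - ξ) 0 ∂μ) * (μ (G i)).toReal :=
          mul_le_mul_of_nonneg_left (hGp i) (hXnn i)
      _ = ∫ ω, max (v i ω - ξ) 0 * (G i).indicator (fun _ => (1 : ℝ)) ω ∂μ :=
          (hGint i).symm
      _ ≤ ∫ ω, (F i).indicator (fun ω => v i ω - ξ) ω ∂μ := by
          have heq : (fun ω => max (v i ω - ξ) 0 * (G i).indicator (fun _ => (1 : ℝ)) ω)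
              = (G i).indicator (fun ω => max (v i ω - ξ) 0) := by
            funext ω
            by_cases hg : ω ∈ G i <;> simp [hg]
          refine integral_mono ?_ (hFint i) (hpt i)
          rw [heq]
          exact (hXint i).indicator (hGmeas i)
  -- sum of expectations bound
  have hsumE : ξ ≤ ∑ i, ∫ ω, max (v i ω - ξ) 0 ∂μ := by
    have hptM : ∀ ω, M ω - ξ ≤ ∑ i, max (v i ω - ξ) 0 := by
      intro ω
      obtain ⟨i, _, hi⟩ := Finset.exists_mem_eq_sup' hne (fun i => v i ω)
      have hMi : M ω = v i ω := hi
      calc M ω - ξ = v i ω - ξ := by rw [hMi]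
        _ ≤ max (v i ω - ξ) 0 := le_max_left _ _
        _ ≤ ∑ j, max (v j ω - ξ) 0 :=
            Finset.single_le_sum (f := fun j => max (v j ω - ξ) 0)
              (fun j _ => le_max_right _ _) (Finset.mem_univ i)
    have h2 : ∫ ω, M ω ∂μ = 2 * ξ := by rw [hξ]; ring
    calc ξ = ∫ ω, M ω ∂μ - ξ := by rw [h2]; ring
      _ = ∫ ω, (M ω - ξ) ∂μ := by
          rw [integral_sub hMint (integrable_const ξ), integral_const, probReal_univ]
          simp
      _ ≤ ∫ ω, ∑ i, max (v i ω - ξ) 0 ∂μ :=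
          integral_mono (hMint.sub (integrable_const ξ))
            (integrable_finset_sum _ fun i _ => hXint i) hptM
      _ = ∑ i, ∫ ω, max (v i ω - ξ) 0 ∂μ :=
          integral_finset_sum _ fun i _ => hXint i
  -- combine
  rw [hIr]
  have : ξ * p ≤ ∑ i, ∫ ω, (F i).indicator (fun ω => v i ω - ξ) ω ∂μ := by
    calc ξ * p ≤ (∑ i, ∫ ω, max (v i ω - ξ) 0 ∂μ) * p :=
          mul_le_mul_of_nonneg_right hsumE hp0
      _ = ∑ i, (∫ ω, max (v i ω - ξ) 0 ∂μ) * p := by rw [Finset.sum_mul]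
      _ ≤ ∑ i, ∫ ω, (F i).indicator (fun ω => v i ω - ξ) ω ∂μ :=
          Finset.sum_le_sum fun i _ => hFi_lb i
  nlinarith [this, hpA]
end

section
/- Let $m \geq 3$ be an integer and $L = \lceil m - \log_2 m \rceil$. Define the sequence $q_0 = 1$, $q_1 = \frac{1}{m-1}$, and $q_k = \frac{m-k+2}{m-k} \cdot q_{k-1}$ for $2 \leq k \leq L$, and set $p_k = q_k / \sum_{j=0}^L q_j$. Then for every $0 \leq k \leq L-1$, $\sum_{j=0}^k p_j = p_{k+1} \cdot (m - k - 1)$, and consequently the quantities $Q_k := \sum_{j=0}^k p_j \cdot (m-k)$ are all equal to the constant $Q = m - L$. -/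
/-- The combinatorial property of the lower-bound example: the recursively defined
distribution `p` satisfies `∑_{j≤k} pⱼ = p_{k+1}(m-k-1)`, and hence all quantities
`Q_k = (∑_{j≤k} pⱼ)(m-k)` equal the constant `m - L`. -/
theorem stmt17 (m L : ℕ) (hm : 3 ≤ m)
    (hL : (L : ℤ) = ⌈(m : ℝ) - Real.logb 2 m⌉)
    (q p : ℕ → ℝ)
    (hq0 : q 0 = 1) (hq1 : q 1 = 1 / ((m : ℝ) - 1))
    (hqk : ∀ k, 2 ≤ k → k ≤ L →
      q k = (((m : ℝ) - k + 2) / ((m : ℝ) - k)) * q (k - 1))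
    (hp : ∀ k, p k = q k / ∑ j ∈ Finset.range (L + 1), q j) :
    (∀ k, k + 1 ≤ L →
      ∑ j ∈ Finset.range (k + 1), p j = p (k + 1) * ((m : ℝ) - k - 1))
    ∧ (∀ k ≤ L,
      (∑ j ∈ Finset.range (k + 1), p j) * ((m : ℝ) - k) = (m : ℝ) - L) := by
  have hm2 : (2 : ℝ) ≤ (m : ℝ) := by exact_mod_cast le_trans (by norm_num) hm
  have hmR : (3 : ℝ) ≤ (m : ℝ) := by exact_mod_cast hm
  -- L ≤ m - 1
  have hlog : (1 : ℝ) ≤ Real.logb 2 m := by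
    have := Real.logb_le_logb_of_le (b := 2) (x := 2) (y := m) (by norm_num) (by norm_num) hm2
    simpa [Real.logb_self_eq_one] using this
  have hLm : L + 1 ≤ m := by
    have h1 : (L : ℤ) ≤ (m : ℤ) - 1 := by
      rw [hL]
      rw [Int.ceil_le]
      push_cast
      linarith
    omega
  -- positivity of q on [0, L]
  have hqpos : ∀ k ≤ L, 0 < q k := by
    intro k
    induction k with
    | zero => intro _; rw [hq0]; norm_num
    | succ n ih =>
      intro hn
      rcases Nat.eq_or_lt_of_le (Nat.one_le_iff_ne_zero.mpr (Nat.succ_ne_zero n)) with h1 | h2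
      · have hn0 : n = 0 := by omega
        subst hn0
        rw [hq1]
        have : (0:ℝ) < (m:ℝ) - 1 := by linarith
        positivity
      · have h2' : 2 ≤ n + 1 := h2
        rw [hqk (n+1) h2' hn]
        have hkm : (n:ℝ) + 1 ≤ (m:ℝ) - 1 := by
          have h' : n + 1 + 1 ≤ m := le_trans (by omega) hLm
          have := (Nat.cast_le (α := ℝ)).mpr h'
          push_cast at this; linarith
        have hnum : (0:ℝ) < (m:ℝ) - (↑(n+1)) + 2 := by push_cast; linarith
        have hden : (0:ℝ) < (m:ℝ) - (↑(n+1)) := by push_cast; linarith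
        have hq' := ih (le_trans (Nat.le_succ n) hn)
        simp only [Nat.add_sub_cancel]
        positivity
  -- key identity for q
  have key : ∀ k, k + 1 ≤ L →
      ∑ j ∈ Finset.range (k + 1), q j = q (k + 1) * ((m : ℝ) - k - 1) := by
    intro k
    induction k with
    | zero =>
      intro _
      have hm1 : (m:ℝ) - 1 ≠ 0 := by linarith
      simp [hq0, hq1]
      field_simp
    | succ n ih =>
      intro hn
      have hih := ih (le_trans (by omega) hn)
      rw [Finset.sum_range_succ, hih]
      have hrec : q (n + 2) = (((m : ℝ) - (↑(n+2)) + 2) / ((m : ℝ) - (↑(n+2)))) * q (n + 1) := by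
        have := hqk (n + 2) (by omega) (by omega)
        simpa using this
      have hden : (0:ℝ) < (m:ℝ) - (↑(n+2)) := by
        have : n + 2 + 1 ≤ m := by omega
        have := (Nat.cast_le (α := ℝ)).mpr this
        push_cast at this ⊢; linarith
      have hdne : ((m:ℝ) - (↑(n+2))) ≠ 0 := ne_of_gt hden
      rw [show n + 1 + 1 = n + 2 from rfl, hrec]
      push_cast at hdne ⊢
      field_simp
      ring
  -- part 1 for p
  have part1 : ∀ k, k + 1 ≤ L →
      ∑ j ∈ Finset.range (k + 1), p j = p (k + 1) * ((m : ℝ) - k - 1) := by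
    intro k hk
    have : ∑ j ∈ Finset.range (k + 1), p j
        = (∑ j ∈ Finset.range (k + 1), q j) / ∑ j ∈ Finset.range (L + 1), q j := by
      rw [Finset.sum_div]
      exact Finset.sum_congr rfl fun j _ => hp j
    rw [this, key k hk, hp (k + 1)]
    ring
  refine ⟨part1, ?_⟩
  -- sum of p over range (L+1) is 1
  have hSpos : 0 < ∑ j ∈ Finset.range (L + 1), q j := by
    apply Finset.sum_pos
    · intro j hj
      exact hqpos j (by simpa [Nat.lt_succ_iff] using hj)
    · exact ⟨0, Finset.mem_range.mpr (Nat.succ_pos L)⟩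
  have hsum1 : ∑ j ∈ Finset.range (L + 1), p j = 1 := by
    have : ∑ j ∈ Finset.range (L + 1), p j
        = (∑ j ∈ Finset.range (L + 1), q j) / ∑ j ∈ Finset.range (L + 1), q j := by
      rw [Finset.sum_div]
      exact Finset.sum_congr rfl fun j _ => hp j
    rw [this, div_self (ne_of_gt hSpos)]
  -- downward induction
  have main : ∀ d k, k + d = L →
      (∑ j ∈ Finset.range (k + 1), p j) * ((m : ℝ) - k) = (m : ℝ) - L := by
    intro d
    induction d with
    | zero =>
      intro k hk
      simp only [Nat.add_zero] at hk
      subst hk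
      rw [hsum1]; ring
    | succ n ih =>
      intro k hk
      have hk1 : k + 1 ≤ L := by omega
      have hQ1 := ih (k + 1) (by omega)
      have h1 := part1 k hk1
      have hs : ∑ j ∈ Finset.range (k + 2), p j = p (k + 1) * ((m:ℝ) - k) := by
        rw [Finset.sum_range_succ, h1]; ring
      rw [show k + 1 + 1 = k + 2 from rfl, hs] at hQ1
      rw [h1]
      push_cast at hQ1 ⊢
      nlinarith [hQ1]
  intro k hk
  exact main (L - k) k (by omega)
end

section
/- Let $\theta_i : \mathbb{R}^n \to \mathbb{R}$, $i \in [n]$, be bi-monotonic posted price functions: $\theta_i(s)$ is non-decreasing in $s_i$ and non-increasing in $s_j$ for every $j \neq i$. Fix a buyer type $b \in \mathbb{R}^n$, and define the buyer's choice $i^*(s) \in \argmax_{i : b_i \geq \theta_i(s)} (b_i - \theta_i(s))$ (with a consistent tie-breaking rule, and no purchase if the argmax set is empty). Then for every $i$, the allocation indicator $\hat{x}_i(s) = \mathbb{1}[i^*(s) = i]$ is non-increasing in $s_i$: if $i^*(s_i, s_{-i}) = i$ and $s_i' \leq s_i$, then $i^*(s_i', s_{-i}) = i$. -/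
/-- Bi-monotonic posted prices induce a monotone allocation: if the buyer's
(min-index tie-breaking) utility-maximizing affordable choice at cost profile `s`
is item `i`, then it remains `i` when seller `i` lowers her reported cost. -/
theorem stmt19 (n : ℕ) (θ : Fin n → (Fin n → ℝ) → ℝ) (b : Fin n → ℝ)
    (hmono : ∀ (i : Fin n) (s : Fin n → ℝ) (c : ℝ), c ≤ s i →
      θ i (Function.update s i c) ≤ θ i s)
    (hanti : ∀ (i j : Fin n) (s : Fin n → ℝ) (c : ℝ), j ≠ i → c ≤ s j →
      θ i s ≤ θ i (Function.update s j c))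
    (istar : (Fin n → ℝ) → Option (Fin n))
    (histar : ∀ (s : Fin n → ℝ) (i : Fin n), istar s = some i ↔
      (θ i s ≤ b i ∧ ∀ j, θ j s ≤ b j →
        (b j - θ j s < b i - θ i s ∨ (b j - θ j s = b i - θ i s ∧ i ≤ j)))) :
    ∀ (s : Fin n → ℝ) (i : Fin n) (c : ℝ), istar s = some i → c ≤ s i →
      istar (Function.update s i c) = some i := by
  intro s i c hs hc
  rw [histar] at hs ⊢
  obtain ⟨haff, hbest⟩ := hs
  have hii : θ i (Function.update s i c) ≤ θ i s := hmono i s c hc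
  refine ⟨hii.trans haff, fun j hj => ?_⟩
  by_cases hji : j = i
  · subst hji; exact Or.inr ⟨rfl, le_refl _⟩
  · have hji' : θ j s ≤ θ j (Function.update s i c) := hanti j i s c (Ne.symm hji) hc
    have hjaff : θ j s ≤ b j := hji'.trans hj
    rcases hbest j hjaff with h | ⟨heq, hle⟩
    · left; linarith
    · rcases lt_or_eq_of_le hji' with h' | h'
      · left; linarith
      · rcases lt_or_eq_of_le hii with h'' | h''
        · left; linarith
        · right; constructor
          · linarith
          · exact hle
end
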